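/- Under the colour rewriting rules G → YBG, Y → YBG, O → YBO, B → BO applied to rows of colours (each row obtained by replacing every letter of the previous row by its image word, concatenated in order), the number of letters in the n-th row starting from a single G grows like the odd-indexed Fibonacci numbers: if Lₙ denotes the length of the n-th row with L₀ = 1, then Lₙ = f(2n+1) where f 1 = 1, f 2 = 2, f(n+2) = f(n+1) + f n. -/

import Mathlib

inductive Color | G | Y | B | O
deriving DecidableEq

/-- The substitution G → YBG, Y → YBG, O → YBO, B → BO. -/
def sub : Color → List Color
  | .G => [.Y, .B, .G]
  | .Y => [.Y, .B, .G]
  | .O => [.Y, .B, .O]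
  | .B => [.B, .O]

/-- The substitution extended to words by concatenation. -/
def subW (w : List Color) : List Color := w.flatMap sub

/-- Count of letters whose image under `sub` has length 3. -/
def tc (w : List Color) : ℕ := (w.filter (fun c => c ≠ Color.B)).length
/-- Count of `B`'s, whose image has length 2. -/
def bc (w : List Color) : ℕ := (w.filter (fun c => c = Color.B)).length

lemma len_eq (w : List Color) : w.length = tc w + bc w := by
  induction w with
  | nil => rfl
  | cons c w ih =>
    unfold tc bc at *
    cases c <;> simp_all <;> omega

lemma subW_cons (c : Color) (w : List Color) : subW (c :: w) = sub c ++ subW w := rfl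

lemma tc_append (u v : List Color) : tc (u ++ v) = tc u + tc v := by
  simp [tc, List.filter_append]

lemma bc_append (u v : List Color) : bc (u ++ v) = bc u + bc v := by
  simp [bc, List.filter_append]

lemma tc_subW (w : List Color) : tc (subW w) = 2 * tc w + bc w := by
  induction w with
  | nil => rfl
  | cons c w ih =>
    rw [subW_cons, tc_append, ih]
    cases c <;> simp [tc, bc, sub] <;> omega

lemma bc_subW (w : List Color) : bc (subW w) = tc w + bc w := by
  induction w with
  | nil => rfl
  | cons c w ih =>
    rw [subW_cons, bc_append, ih]
    cases c <;> simp [tc, bc, sub] <;> omega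

/-- The length of the n-th row obtained from a single G equals `f (2n+1)`. -/
theorem row_length_fib
    (f : ℕ → ℕ) (hf1 : f 1 = 1) (hf2 : f 2 = 2)
    (hf : ∀ n, f (n + 2) = f (n + 1) + f n) :
    ∀ n, (subW^[n] [Color.G]).length = f (2 * n + 1) := by
  have hf0 : f 0 = 1 := by have h : f 2 = f 1 + f 0 := hf 0; omega
  have hmono : ∀ m, f m ≤ f (m + 1) := by
    intro m
    induction m with
    | zero => show f 0 ≤ f 1; omega
    | succ k ih =>
      show f (k + 1) ≤ f (k + 2)
      have h : f (k + 2) = f (k + 1) + f k := hf k; omega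
  have key : ∀ n, tc (subW^[n] [Color.G]) = f (2 * n) ∧
      bc (subW^[n] [Color.G]) = f (2 * n + 1) - f (2 * n) := by
    intro n
    induction n with
    | zero => simp [tc, bc, hf0, hf1]
    | succ n ih =>
      obtain ⟨h1, h2⟩ := ih
      rw [Function.iterate_succ_apply', tc_subW, bc_subW, h1, h2]
      have e1 := hf (2 * n)
      have e2 : f (2 * n + 2 + 1) = f (2 * n + 2) + f (2 * n + 1) := hf (2 * n + 1)
      have p1 := hmono (2 * n)
      have q1 : 2 * (n + 1) = 2 * n + 2 := by ring
      have q2 : 2 * (n + 1) + 1 = 2 * n + 2 + 1 := by ring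
      rw [q1]
      omega
  intro n
  obtain ⟨h1, h2⟩ := key n
  rw [len_eq, h1, h2]
  have := hmono (2 * n)
  omega
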